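/- If a deterministic algorithm for binary string guessing with known history guesses correctly on more than α·m bits of every length-m input (1/2 ≤ α < 1) using b bits of advice, then 2^b · V ≥ 2^m, where V is the number of binary strings of length m within Hamming distance (1−α)m of a fixed string; consequently b ≥ m − log₂ V ≥ (1 + (1−α)log₂(1−α) + α log₂ α)·m. -/

import Mathlib

open Finset

lemma count_low_weight (m k : ℕ) :
    ((univ : Finset (Fin m → Bool)).filter
        (fun c => (univ.filter fun i => c i = false).card ≤ k)).card
      = ∑ j ∈ range (k+1), m.choose j := by
  classical
  have hdisj : ∀ i ∈ range (k+1), ∀ j ∈ range (k+1), i ≠ j →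
      Disjoint ((univ : Finset (Fin m)).powersetCard i)
        ((univ : Finset (Fin m)).powersetCard j) := by
    intro i _ j _ hij
    apply Finset.disjoint_left.2
    intro s hs hs'
    exact hij ((Finset.mem_powersetCard.1 hs).2.symm.trans (Finset.mem_powersetCard.1 hs').2)
  have hb := Finset.card_biUnion hdisj
  have hsum : ∑ j ∈ range (k+1), m.choose j
      = ∑ j ∈ range (k+1), ((univ : Finset (Fin m)).powersetCard j).card := by
    simp [Finset.card_powersetCard]
  rw [hsum, ← hb]
  apply Finset.card_bij (fun c _ => univ.filter fun i => c i = false)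
  · intro c hc
    simp only [mem_filter, mem_univ, true_and] at hc
    simp only [Finset.mem_biUnion, Finset.mem_range, Finset.mem_powersetCard]
    exact ⟨_, Nat.lt_succ_of_le hc, Finset.subset_univ _, rfl⟩
  · intro c _ d _ h
    funext i
    have := Finset.ext_iff.1 h i
    simp only [mem_filter, mem_univ, true_and] at this
    cases hci : c i <;> cases hdi : d i <;> simp_all
  · intro s hs
    simp only [Finset.mem_biUnion, Finset.mem_range, Finset.mem_powersetCard] at hs
    obtain ⟨j, hj, _, hcard⟩ := hs
    refine ⟨fun i => decide (i ∉ s), ?_, ?_⟩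
    · simp only [mem_filter, mem_univ, true_and]
      have : (univ.filter fun i => (decide (i ∉ s) : Bool) = false) = s := by
        ext i; simp
      rw [this, hcard]; omega
    · ext i; simp

lemma guess_inj (m b : ℕ)
    (g : (Fin b → Bool) → (Fin m → Bool) → Fin m → Bool)
    (honline : ∀ a x y i, (∀ j : Fin m, j < i → x j = y j) → g a x i = g a y i)
    (a : (Fin m → Bool) → (Fin b → Bool)) :
    Function.Injective (fun x : Fin m → Bool =>
      (a x, fun i => decide (g (a x) x i = x i))) := by
  intro x y h
  simp only [Prod.mk.injEq] at h
  obtain ⟨ha, hc⟩ := h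
  have hc' : ∀ i, (decide (g (a x) x i = x i) : Bool) = decide (g (a y) y i = y i) :=
    fun i => congrFun hc i
  have key : ∀ n : ℕ, ∀ i : Fin m, (i : ℕ) = n → x i = y i := by
    intro n
    induction n using Nat.strong_induction_on with
    | _ n ih =>
      intro i hi
      subst hi
      have hxy : ∀ j : Fin m, j < i → x j = y j :=
        fun j hj => ih j (Fin.lt_iff_val_lt_val.1 hj) j rfl
      have hg : g (a x) x i = g (a x) y i := honline (a x) x y i hxy
      have h2 := hc' i
      rw [ha] at hg
      rw [← hg] at h2
      cases hb : g (a y) x i <;> cases hx : x i <;> cases hy : y i <;> simp_all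
  exact funext fun i => key i i rfl

lemma logb_rpow' {x : ℝ} (hx : 0 < x) (y : ℝ) :
    Real.logb 2 (x ^ y) = y * Real.logb 2 x := by
  rw [Real.logb, Real.logb, Real.log_rpow hx]; ring

/-- Lower bound for binary string guessing with known history.
A deterministic algorithm with `b` advice bits is modelled by a guessing
function `g` taking the advice string and the input string, where the guess for
bit `i` may only depend on the (revealed) bits before `i` (`honline`).  If for
every input string some advice string makes the algorithm guess correctly on
more than `α·m` bits (`1/2 ≤ α < 1`), then `2^b · V ≥ 2^m` where
`V = Σ_{i ≤ (1−α)m} C(m,i)` is the volume of the Hamming ball of radius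
`(1−α)m`; consequently `b ≥ m − log₂ V ≥ (1 + (1−α)log₂(1−α) + α log₂ α)·m`. -/
theorem string_guessing_advice_lower_bound (m b : ℕ) (α : ℝ)
    (hα1 : 1 / 2 ≤ α) (hα2 : α < 1)
    (g : (Fin b → Bool) → (Fin m → Bool) → Fin m → Bool)
    (honline : ∀ a x y i, (∀ j : Fin m, j < i → x j = y j) → g a x i = g a y i)
    (hcorrect : ∀ x : Fin m → Bool, ∃ a,
      α * m < ((Finset.univ.filter fun i => g a x i = x i).card : ℝ)) :
    ((2 : ℝ) ^ m ≤ (2 : ℝ) ^ b *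
        (∑ i ∈ Finset.range (⌊(1 - α) * m⌋₊ + 1), (m.choose i : ℝ))) ∧
    ((m : ℝ) - Real.logb 2
        (∑ i ∈ Finset.range (⌊(1 - α) * m⌋₊ + 1), (m.choose i : ℝ)) ≤ (b : ℝ)) ∧
    ((1 + (1 - α) * Real.logb 2 (1 - α) + α * Real.logb 2 α) * m ≤ (b : ℝ)) := by
  classical
  set k : ℕ := ⌊(1 - α) * m⌋₊ with hkdef
  set V : ℝ := ∑ i ∈ Finset.range (k + 1), (m.choose i : ℝ) with hVdef
  have hβ0 : (0 : ℝ) < 1 - α := by linarith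
  have hα0 : (0 : ℝ) < α := by linarith
  have hm0 : (0 : ℝ) ≤ (m : ℝ) := Nat.cast_nonneg m
  -- k ≤ m
  have hkm' : (k : ℝ) ≤ (1 - α) * m := Nat.floor_le (by positivity)
  have hkm : k ≤ m := by
    have : (k : ℝ) ≤ (m : ℝ) := le_trans hkm' (by nlinarith)
    exact_mod_cast this
  ---- Part 1
  choose a ha using hcorrect
  have part1n : 2 ^ m ≤ 2 ^ b * ∑ j ∈ range (k + 1), m.choose j := by
    set T : Finset (Fin m → Bool) :=
      univ.filter (fun c => (univ.filter fun i => c i = false).card ≤ k) with hT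
    have hmaps : ∀ x : Fin m → Bool,
        (a x, fun i => decide (g (a x) x i = x i)) ∈
          (univ : Finset (Fin b → Bool)) ×ˢ T := by
      intro x
      refine Finset.mem_product.2 ⟨Finset.mem_univ _, ?_⟩
      simp only [hT, mem_filter, mem_univ, true_and]
      have hfe : (univ.filter fun i => (decide (g (a x) x i = x i) : Bool) = false)
          = univ.filter fun i => ¬ (g (a x) x i = x i) := by
        apply Finset.filter_congr; intro i _; simp
      rw [hfe, Finset.filter_not, Finset.card_sdiff_of_subset (Finset.filter_subset _ _)]
      set c := (univ.filter fun i => g (a x) x i = x i).card with hc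
      have hcle : c ≤ m := le_trans (Finset.card_filter_le _ _)
        (by simp [Finset.card_univ])
      have hcard_univ : (univ : Finset (Fin m)).card = m := by simp
      rw [hcard_univ]
      apply Nat.le_floor
      have : ((m - c : ℕ) : ℝ) = (m : ℝ) - c := by
        rw [Nat.cast_sub hcle]
      rw [this]
      have := ha x
      rw [← hc] at this
      nlinarith
    have hinj := guess_inj m b g honline a
    have hle := Finset.card_le_card_of_injOn
      (s := (univ : Finset (Fin m → Bool)))
      (t := (univ : Finset (Fin b → Bool)) ×ˢ T)
      (f := fun x : Fin m → Bool => (a x, fun i => decide (g (a x) x i = x i)))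
      (fun x _ => hmaps x) (Function.Injective.injOn hinj)
    have h1 : (univ : Finset (Fin m → Bool)).card = 2 ^ m := by
      simp [Finset.card_univ]
    have h2 : ((univ : Finset (Fin b → Bool)) ×ˢ T).card
        = 2 ^ b * ∑ j ∈ range (k + 1), m.choose j := by
      rw [Finset.card_product, hT, count_low_weight]
      simp [Finset.card_univ]
    rw [h1, h2] at hle
    exact hle
  have part1 : (2 : ℝ) ^ m ≤ (2 : ℝ) ^ b * V := by
    have := (Nat.cast_le (α := ℝ)).2 part1n
    push_cast at this
    simpa [hVdef] using this
  ---- V ≥ 1, V > 0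
  have hV1 : (1 : ℝ) ≤ V := by
    have h0 : ((m.choose 0 : ℕ) : ℝ) ≤ V := by
      apply Finset.single_le_sum (f := fun i => ((m.choose i : ℕ) : ℝ))
      · intro i _; positivity
      · simp
    simpa using h0
  have hVpos : (0 : ℝ) < V := lt_of_lt_of_le one_pos hV1
  ---- Part 2
  have part2 : (m : ℝ) - Real.logb 2 V ≤ (b : ℝ) := by
    have hlog := Real.logb_le_logb_of_le (b := 2) (by norm_num) (by positivity) part1
    rw [Real.logb_mul (by positivity) hVpos.ne'] at hlog
    rw [Real.logb_pow, Real.logb_pow] at hlog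
    have h22 : Real.logb 2 2 = 1 := Real.logb_self_eq_one (b := 2) (by norm_num)
    rw [h22] at hlog
    linarith
  refine ⟨part1, part2, ?_⟩
  ---- Part 3: entropy bound on V
  set β : ℝ := 1 - α with hβdef
  have hβα : β ≤ α := by rw [hβdef]; linarith
  set W : ℝ := β ^ (β * (m : ℝ)) * α ^ ((m : ℝ) - β * m) with hWdef
  have hWpos : 0 < W := by
    apply mul_pos <;> exact Real.rpow_pos_of_pos (by linarith) _
  -- each low-weight term dominates W
  have hterm : ∀ i ∈ range (k + 1), W ≤ β ^ (i : ℕ) * α ^ (m - i : ℕ) := by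
    intro i hi
    have him : i ≤ k := Nat.lt_succ_iff.1 (Finset.mem_range.1 hi)
    have hile : (i : ℝ) ≤ β * m := le_trans (by exact_mod_cast him) hkm'
    have hform : ∀ x : ℝ, β ^ x * α ^ ((m : ℝ) - x) = α ^ (m : ℝ) * (β / α) ^ x := by
      intro x
      rw [Real.div_rpow hβ0.le hα0.le, Real.rpow_sub hα0]
      ring
    have hmono : (β / α) ^ (β * (m : ℝ)) ≤ (β / α) ^ ((i : ℕ) : ℝ) :=
      Real.rpow_le_rpow_of_exponent_ge (by positivity)
        (div_le_one_of_le₀ hβα hα0.le) hile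
    have h1 : W ≤ β ^ ((i : ℕ) : ℝ) * α ^ ((m : ℝ) - (i : ℕ)) := by
      rw [hWdef, hform, hform]
      exact mul_le_mul_of_nonneg_left hmono (Real.rpow_nonneg hα0.le _)
    have heq : β ^ ((i : ℕ) : ℝ) * α ^ ((m : ℝ) - (i : ℕ)) = β ^ (i : ℕ) * α ^ (m - i : ℕ) := by
      have him' : i ≤ m := le_trans him hkm
      have : ((m : ℝ) - (i : ℕ)) = ((m - i : ℕ) : ℝ) := by
        rw [Nat.cast_sub him']
      rw [this, Real.rpow_natCast, Real.rpow_natCast]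
    rw [heq] at h1
    exact h1
  -- binomial theorem
  have hbin : ∑ i ∈ range (m + 1), (m.choose i : ℝ) * (β ^ i * α ^ (m - i)) = 1 := by
    have hβα1 : β + α = 1 := by rw [hβdef]; ring
    calc ∑ i ∈ range (m + 1), (m.choose i : ℝ) * (β ^ i * α ^ (m - i))
        = ∑ i ∈ range (m + 1), β ^ i * α ^ (m - i) * (m.choose i : ℝ) := by
          apply Finset.sum_congr rfl; intro i _; ring
      _ = (β + α) ^ m := (add_pow β α m).symm
      _ = 1 := by rw [hβα1, one_pow]
  have hVW : V * W ≤ 1 := by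
    calc V * W = ∑ i ∈ range (k + 1), (m.choose i : ℝ) * W := by
          rw [hVdef, Finset.sum_mul]
      _ ≤ ∑ i ∈ range (k + 1), (m.choose i : ℝ) * (β ^ i * α ^ (m - i)) := by
          apply Finset.sum_le_sum
          intro i hi
          exact mul_le_mul_of_nonneg_left (hterm i hi) (by positivity)
      _ ≤ ∑ i ∈ range (m + 1), (m.choose i : ℝ) * (β ^ i * α ^ (m - i)) := by
          apply Finset.sum_le_sum_of_subset_of_nonneg
          · exact Finset.range_subset_range.2 (by omega)
          · intro i _ _
            have : (0:ℝ) ≤ β ^ i * α ^ (m - i) := by positivity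
            positivity
      _ = 1 := hbin
  have hVle : V ≤ W⁻¹ := by
    rw [← one_div]
    exact (le_div_iff₀ hWpos).2 hVW
  -- log bound
  have hlogV : Real.logb 2 V ≤ -(β * m * Real.logb 2 β + α * m * Real.logb 2 α) := by
    have h1 : Real.logb 2 V ≤ Real.logb 2 W⁻¹ :=
      Real.logb_le_logb_of_le (by norm_num) hVpos hVle
    rw [Real.logb_inv] at h1
    have h2 : Real.logb 2 W = β * m * Real.logb 2 β + α * m * Real.logb 2 α := by
      rw [hWdef, Real.logb_mul (Real.rpow_pos_of_pos hβ0 _).ne'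
        (Real.rpow_pos_of_pos hα0 _).ne', logb_rpow' hβ0, logb_rpow' hα0]
      have : (m : ℝ) - β * m = α * m := by rw [hβdef]; ring
      rw [this]
    rw [h2] at h1
    exact h1
  have hfinal : (1 + β * Real.logb 2 β + α * Real.logb 2 α) * m
      = (m : ℝ) + (β * m * Real.logb 2 β + α * m * Real.logb 2 α) := by ring
  rw [hfinal]
  linarith
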